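/- Let A be a finite-dimensional k-algebra with d = dim_k A, and let P• = (P^i, d^i) be a bounded complex of finitely generated projective A-modules which is minimal, i.e. Im d^i ⊆ rad P^{i+1} for all i. If dim_k H^i(P•) ≤ c for all i, then for every i we have dim_k P^i ≤ d · (dim_k P^{i+1} + c). -/

import Mathlib

open CategoryTheory

/-- The radical of a module `M` over `A`: the submodule `rad(A)·M`. -/
def modRad (A M : Type*) [Ring A] [AddCommGroup M] [Module A M] : Submodule A M :=
  Submodule.span A {y | ∃ a ∈ Ideal.jacobson (⊥ : Ideal A), ∃ x : M, a • x = y}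

/-- The dimension of an `A`-module over the base field `k`. -/
noncomputable def kdim (k : Type*) [Field k] (A : Type*) [Ring A] [Algebra k A]
    (M : Type*) [AddCommGroup M] [Module A M] : ℕ :=
  Module.finrank k (RestrictScalars k A M)

section Helpers

variable {k : Type*} [Field k] {A : Type*} [Ring A] [Algebra k A]
variable {M N : Type*} [AddCommGroup M] [Module A M] [AddCommGroup N] [Module A N]

instance (priority := high) rsACM (k A M : Type*) [AddCommGroup M] :
    AddCommMonoid (RestrictScalars k A M) :=
  AddCommGroup.toAddCommMonoid

instance (priority := high) kmodInst (k A M : Type*) [Field k] [Ring A] [Algebra k A]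
    [AddCommGroup M] [Module A M] : Module k (RestrictScalars k A M) :=
  RestrictScalars.module k A M

/-- Restriction of scalars of a linear map. -/
def kmap (f : M →ₗ[A] N) : RestrictScalars k A M →ₗ[k] RestrictScalars k A N where
  toFun x := f x
  map_add' x y := f.map_add x y
  map_smul' c x := f.map_smul (algebraMap k A c) x

lemma kdim_eq_of_equiv (e : M ≃ₗ[A] N) : kdim k A M = kdim k A N :=
  LinearEquiv.finrank_eq
    (LinearEquiv.ofLinear (kmap (k := k) e.toLinearMap) (kmap (k := k) e.symm.toLinearMap)
      (LinearMap.ext fun x => e.apply_symm_apply x)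
      (LinearMap.ext fun x => e.symm_apply_apply x))

lemma kfin [FiniteDimensional k A] (M : Type*) [AddCommGroup M] [Module A M]
    [Module.Finite A M] : Module.Finite k (RestrictScalars k A M) := by
  letI : Module A (RestrictScalars k A M) := RestrictScalars.moduleOrig k A M
  letI : Module.Finite A (RestrictScalars k A M) := ‹Module.Finite A M›
  exact Module.Finite.trans A (RestrictScalars k A M)

lemma knoeth [FiniteDimensional k A] (M : Type*) [AddCommGroup M] [Module A M]
    [Module.Finite A M] : IsNoetherian A M := by
  letI : Module A (RestrictScalars k A M) := RestrictScalars.moduleOrig k A M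
  haveI := kfin (k := k) (A := A) M
  haveI : IsNoetherian k (RestrictScalars k A M) := inferInstance
  exact isNoetherian_of_tower k (M := RestrictScalars k A M) this

lemma kdim_le_of_surjective (f : M →ₗ[A] N) (hf : Function.Surjective f)
    [Module.Finite k (RestrictScalars k A M)] : kdim k A N ≤ kdim k A M := by
  have h := LinearMap.finrank_range_le (kmap (k := k) f)
  have hr : LinearMap.range (kmap (k := k) f) = ⊤ := LinearMap.range_eq_top.mpr hf
  rwa [hr, finrank_top] at h

lemma kdim_le_of_injective (f : M →ₗ[A] N) (hf : Function.Injective f)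
    [Module.Finite k (RestrictScalars k A N)] : kdim k A M ≤ kdim k A N :=
  by have := LinearMap.finrank_le_finrank_of_injective (f := kmap (k := k) f) hf; exact this

lemma kdim_quotient_add_kdim (N : Submodule A M)
    [Module.Finite k (RestrictScalars k A M)] :
    kdim k A (M ⧸ N) + kdim k A N = kdim k A M := by
  have h1 := LinearMap.finrank_range_add_finrank_ker (kmap (k := k) N.mkQ)
  have hr : LinearMap.range (kmap (k := k) N.mkQ) = ⊤ :=
    LinearMap.range_eq_top.mpr N.mkQ_surjective
  have hk : LinearMap.ker (kmap (k := k) N.mkQ) = LinearMap.range (kmap (k := k) N.subtype) := by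
    ext x
    constructor
    · intro hx
      have hx' : N.mkQ x = 0 := hx
      exact ⟨⟨x, (Submodule.Quotient.mk_eq_zero N).mp hx'⟩, rfl⟩
    · rintro ⟨y, rfl⟩
      show N.mkQ (N.subtype y) = 0
      simp [(Submodule.Quotient.mk_eq_zero N).mpr y.2]
  have hi : Function.Injective (kmap (k := k) N.subtype) := N.injective_subtype
  rw [hr, finrank_top, hk, LinearMap.finrank_range_of_inj hi] at h1
  exact h1

lemma modRad_eq (M : Type*) [AddCommGroup M] [Module A M] :
    modRad A M = Ideal.jacobson (⊥ : Ideal A) • (⊤ : Submodule A M) := by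
  apply le_antisymm
  · rw [modRad, Submodule.span_le]
    rintro y ⟨a, ha, x, rfl⟩
    exact Submodule.smul_mem_smul ha Submodule.mem_top
  · exact Submodule.smul_le.mpr fun a ha x _ => Submodule.subset_span ⟨a, ha, x, rfl⟩

lemma modRad_le_coatom {M : Type*} [AddCommGroup M] [Module A M]
    (m : Submodule A M) (hm : IsCoatom m) : modRad A M ≤ m := by
  haveI : IsSimpleModule A (M ⧸ m) := isSimpleModule_iff_isCoatom.mpr hm
  rw [modRad, Submodule.span_le]
  rintro y ⟨a, ha, x, rfl⟩
  show a • x ∈ m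
  rw [← Submodule.Quotient.mk_eq_zero m, Submodule.Quotient.mk_smul]
  set s : M ⧸ m := Submodule.Quotient.mk x with hs
  by_cases h0 : s = 0
  · rw [h0, smul_zero]
  · set φ := LinearMap.toSpanSingleton A (M ⧸ m) s with hφdef
    have hspan : Submodule.span A {s} = ⊤ := by
      rcases eq_bot_or_eq_top (Submodule.span A {s}) with h | h
      · exact absurd (Submodule.span_singleton_eq_bot.mp h) h0
      · exact h
    have hφ : Function.Surjective φ := by
      rw [← LinearMap.range_eq_top, ← LinearMap.span_singleton_eq_range]
      exact hspan
    have hker : IsCoatom (LinearMap.ker φ) := LinearMap.isCoatom_ker_of_surjective hφ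
    have hamem : a ∈ LinearMap.ker φ := by
      rw [Ideal.jacobson] at ha
      exact Submodule.mem_sInf.mp ha _ ⟨bot_le, Ideal.isMaximal_def.mpr hker⟩
    have hz : φ a = 0 := hamem
    simpa [hφdef, LinearMap.toSpanSingleton_apply] using hz

lemma nakayama_top [FiniteDimensional k A] {M : Type*} [AddCommGroup M] [Module A M]
    [Module.Finite A M] (N : Submodule A M) (h : N ⊔ modRad A M = ⊤) : N = ⊤ := by
  haveI : IsNoetherian A M := knoeth (k := k) M
  by_contra hN
  haveI : Nontrivial (M ⧸ N) :=
    Submodule.Quotient.nontrivial_iff.mpr hN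
  obtain ⟨m, hm, -⟩ :=
    (eq_top_or_exists_le_coatom (⊥ : Submodule A (M ⧸ N))).resolve_left bot_ne_top
  have h2 : modRad A (M ⧸ N) = ⊤ := by
    have hmap := congrArg (Submodule.map N.mkQ) h
    rw [Submodule.map_sup, Submodule.map_top, Submodule.range_mkQ] at hmap
    have hbot : Submodule.map N.mkQ N = ⊥ := by
      rw [eq_bot_iff]
      rintro y ⟨x, hx, rfl⟩
      simpa [Submodule.mem_bot] using (Submodule.Quotient.mk_eq_zero N).mpr hx
    rw [hbot, bot_sup_eq, modRad_eq, Submodule.map_smul'', Submodule.map_top,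
      Submodule.range_mkQ] at hmap
    rw [modRad_eq]
    exact hmap
  have := (modRad_le_coatom m hm)
  rw [h2, top_le_iff] at this
  exact hm.1 this

lemma kdim_le_gen [FiniteDimensional k A] (M : Type*) [AddCommGroup M] [Module A M]
    [Module.Finite A M] :
    kdim k A M ≤ Module.finrank k A * kdim k A (M ⧸ modRad A M) := by
  classical
  haveI := kfin (k := k) (A := A) M
  haveI := kfin (k := k) (A := A) (M ⧸ modRad A M)
  set n := kdim k A (M ⧸ modRad A M) with hn
  let b : Module.Basis (Fin n) k (RestrictScalars k A (M ⧸ modRad A M)) :=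
    Module.finBasis k (RestrictScalars k A (M ⧸ modRad A M))
  choose x hx using fun i : Fin n => (modRad A M).mkQ_surjective (b i)
  have hNtop : Submodule.span A (Set.range x) = ⊤ := by
    apply nakayama_top (k := k)
    have hmap : Submodule.map (modRad A M).mkQ (Submodule.span A (Set.range x)) = ⊤ := by
      rw [Submodule.map_span, ← Set.range_comp]
      have hcx : (modRad A M).mkQ ∘ x = fun i => b i := funext hx
      rw [hcx, eq_top_iff]
      intro t _
      have ht := b.sum_repr t
      rw [← ht]
      refine Submodule.sum_mem _ fun i _ => ?_
      have hsmul : ∀ (cc : k) (v : RestrictScalars k A (M ⧸ modRad A M)),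
          cc • v = (algebraMap k A cc) • (show M ⧸ modRad A M from v) := fun _ _ => rfl
      rw [hsmul]
      exact Submodule.smul_mem _ _ (Submodule.subset_span ⟨i, rfl⟩)
    have hc2 := congrArg (Submodule.comap (modRad A M).mkQ) hmap
    rwa [Submodule.comap_map_eq, Submodule.ker_mkQ, Submodule.comap_top] at hc2
  let f := Finsupp.linearCombination A x
  have hf : Function.Surjective f := by
    rw [← LinearMap.range_eq_top, Finsupp.range_linearCombination]
    exact hNtop
  haveI := kfin (k := k) (A := A) (Fin n →₀ A)
  have h1 : kdim k A M ≤ kdim k A (Fin n →₀ A) := kdim_le_of_surjective f hf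
  have h2 : kdim k A (Fin n →₀ A) = Module.finrank k A * n := by
    let e : RestrictScalars k A (Fin n →₀ A) ≃ₗ[k] (Fin n →₀ A) :=
      { toFun := fun v => v
        invFun := fun v => v
        map_add' := fun _ _ => rfl
        map_smul' := fun c v => by
          ext i
          show (algebraMap k A c • (show Fin n →₀ A from v)) i
            = (c • (show Fin n →₀ A from v)) i
          rw [Finsupp.smul_apply, Finsupp.smul_apply, Algebra.smul_def, smul_eq_mul]
        left_inv := fun _ => rfl
        right_inv := fun _ => rfl }
    let e' := e.trans (Finsupp.linearEquivFunOnFinite k A (Fin n))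
    show Module.finrank k (RestrictScalars k A (Fin n →₀ A)) = _
    rw [e'.finrank_eq, Module.finrank_pi_fintype, Finset.sum_const, Finset.card_univ,
      Fintype.card_fin, smul_eq_mul]
    ring
  rw [h2] at h1
  exact h1

end Helpers

section SC

variable {k : Type*} [Field k] {A : Type*} [Ring A] [Algebra k A]

lemma shortcomplex_bound [FiniteDimensional k A] (S : ShortComplex (ModuleCat A))
    [Module.Finite A S.X₂] [Module.Finite A S.X₃]
    (hminS : LinearMap.range S.f.hom ≤ modRad A S.X₂)
    (c : ℕ) (hH : kdim k A S.moduleCatLeftHomologyData.H ≤ c) :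
    kdim k A S.X₂ ≤ Module.finrank k A * (kdim k A S.X₃ + c) := by
  haveI fd2 : Module.Finite k (RestrictScalars k A S.X₂) := kfin (k := k) _
  haveI fd3 : Module.Finite k (RestrictScalars k A S.X₃) := kfin (k := k) _
  haveI fdK : Module.Finite k (RestrictScalars k A (LinearMap.ker S.g.hom)) :=
    FiniteDimensional.of_injective (kmap (k := k) (LinearMap.ker S.g.hom).subtype)
      (Submodule.injective_subtype _)
  have hH' : kdim k A
      (↥(LinearMap.ker S.g.hom) ⧸ LinearMap.range S.moduleCatToCycles) ≤ c := by
    have heq : kdim k A (↥(LinearMap.ker S.g.hom) ⧸ LinearMap.range S.moduleCatToCycles)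
        = kdim k A S.moduleCatLeftHomologyData.H := rfl
    rw [heq]; exact hH
  have h3 : kdim k A (S.X₂ ⧸ LinearMap.range S.f.hom) + kdim k A (LinearMap.range S.f.hom)
      = kdim k A S.X₂ := kdim_quotient_add_kdim _
  have h4 : kdim k A (S.X₂ ⧸ LinearMap.ker S.g.hom) + kdim k A (LinearMap.ker S.g.hom)
      = kdim k A S.X₂ := kdim_quotient_add_kdim _
  have h5 : kdim k A (↥(LinearMap.ker S.g.hom) ⧸ LinearMap.range S.moduleCatToCycles)
      + kdim k A (LinearMap.range S.moduleCatToCycles)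
      = kdim k A (LinearMap.ker S.g.hom) := kdim_quotient_add_kdim _
  have hcomp : (LinearMap.ker S.g.hom).subtype.comp S.moduleCatToCycles = S.f.hom :=
    rfl
  have hmapeq : Submodule.map (LinearMap.ker S.g.hom).subtype
      (LinearMap.range S.moduleCatToCycles) = LinearMap.range S.f.hom := by
    rw [← LinearMap.range_comp, hcomp]
  have h6 : kdim k A (LinearMap.range S.moduleCatToCycles)
      = kdim k A (LinearMap.range S.f.hom) :=
    kdim_eq_of_equiv ((Submodule.equivMapOfInjective (LinearMap.ker S.g.hom).subtype
      (Submodule.injective_subtype _) _).trans (LinearEquiv.ofEq _ _ hmapeq))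
  have h8 : kdim k A (S.X₂ ⧸ LinearMap.ker S.g.hom) ≤ kdim k A S.X₃ := by
    calc kdim k A (S.X₂ ⧸ LinearMap.ker S.g.hom)
        = kdim k A (LinearMap.range S.g.hom) :=
          kdim_eq_of_equiv (LinearMap.quotKerEquivRange S.g.hom)
      _ ≤ kdim k A S.X₃ :=
          kdim_le_of_injective (LinearMap.range S.g.hom).subtype (Submodule.injective_subtype _)
  haveI fdq : Module.Finite k (RestrictScalars k A (S.X₂ ⧸ LinearMap.range S.f.hom)) :=
    kfin (k := k) _
  have h2 : kdim k A (S.X₂ ⧸ modRad A S.X₂)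
      ≤ kdim k A (S.X₂ ⧸ LinearMap.range S.f.hom) := by
    have hq : Function.Surjective
        (Submodule.mapQ (LinearMap.range S.f.hom) (modRad A S.X₂) LinearMap.id
          (by simpa using hminS)) := by
      intro y
      obtain ⟨x, rfl⟩ := Submodule.mkQ_surjective _ y
      exact ⟨Submodule.mkQ _ x, by simp [Submodule.mapQ_apply]⟩
    exact kdim_le_of_surjective _ hq
  have h0 : kdim k A S.X₂ ≤ Module.finrank k A * kdim k A (S.X₂ ⧸ modRad A S.X₂) :=
    kdim_le_gen _
  have key : kdim k A (S.X₂ ⧸ modRad A S.X₂) ≤ kdim k A S.X₃ + c := by omega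
  calc kdim k A S.X₂ ≤ Module.finrank k A * kdim k A (S.X₂ ⧸ modRad A S.X₂) := h0
    _ ≤ Module.finrank k A * (kdim k A S.X₃ + c) := Nat.mul_le_mul_left _ key

end SC

/-- Let `A` be a finite-dimensional `k`-algebra of dimension `d` and `X` a bounded
minimal complex of finitely generated projective `A`-modules.  If `dim_k Hⁱ(X) ≤ c`
for all `i`, then `dim_k Xⁱ ≤ d · (dim_k Xⁱ⁺¹ + c)` for every `i`. -/
theorem stmt_1 (k : Type*) [Field k] (A : Type*) [Ring A] [Algebra k A]
    [FiniteDimensional k A]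
    (X : CochainComplex (ModuleCat A) ℤ)
    (hbdd : ∃ a b : ℤ, ∀ i : ℤ, (i < a ∨ b < i) → Subsingleton (X.X i))
    (hfg : ∀ i : ℤ, Module.Finite A (X.X i))
    (hproj : ∀ i : ℤ, Module.Projective A (X.X i))
    (hmin : ∀ i : ℤ, LinearMap.range (X.d i (i + 1)).hom ≤ modRad A (X.X (i + 1)))
    (c : ℕ) (hc : ∀ i : ℤ, kdim k A (X.homology i) ≤ c) :
    ∀ i : ℤ, kdim k A (X.X i) ≤
      Module.finrank k A * (kdim k A (X.X (i + 1)) + c) := by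
  intro i
  have hn : (ComplexShape.up ℤ).next i = i + 1 := ComplexShape.next_eq' _ rfl
  haveI h2i : Module.Finite A ((X.sc i).X₂) := hfg i
  haveI h3i : Module.Finite A ((X.sc i).X₃) := hfg ((ComplexShape.up ℤ).next i)
  have hrange : ∀ j : ℤ, LinearMap.range (X.d j i).hom ≤ modRad A (X.X i) := by
    intro j
    by_cases hji : j + 1 = i
    · subst hji; exact hmin j
    · rintro y ⟨x, rfl⟩
      rw [X.shape j i hji]
      exact Submodule.zero_mem _
  have hH : kdim k A ((X.sc i).moduleCatLeftHomologyData.H) ≤ c := by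
    calc kdim k A ((X.sc i).moduleCatLeftHomologyData.H)
        = kdim k A (X.homology i) :=
          (kdim_eq_of_equiv ((X.sc i).moduleCatHomologyIso.toLinearEquiv)).symm
      _ ≤ c := hc i
  rw [← hn]
  exact shortcomplex_bound (X.sc i) (hrange _) c hH
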